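/- Let a multiset H of items, each of size strictly greater than 1/3, be packable into |H| − k unit-capacity bins for some integer k ≥ 0. Then the 2k items of smallest size in H can be partitioned into k pairs, each pair having total size at most 1. -/

import Mathlib

open scoped Classical

set_option maxHeartbeats 2000000 in
theorem stmt13 (M k : ℕ) (hk : k ≤ M) (h : Fin M → ℝ)
    (hrange : ∀ i, 1/3 < h i ∧ h i ≤ 1)
    (hsort : ∀ i j : Fin M, i ≤ j → h j ≤ h i)
    (P : Fin M → Fin (M - k))
    (hpack : ∀ b : Fin (M - k), ∑ i ∈ Finset.univ.filter (fun i => P i = b), h i ≤ 1) :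
    ∃ Q : {i : Fin M // M ≤ i.val + 2 * k} → Fin k,
      (∀ b : Fin k, (Finset.univ.filter (fun x => Q x = b)).card = 2) ∧
      (∀ b : Fin k, ∑ x ∈ Finset.univ.filter (fun x => Q x = b), h x.val ≤ 1) := by
  classical
  set F : Fin (M - k) → Finset (Fin M) := fun b => Finset.univ.filter (fun i => P i = b) with hF
  have hFmem : ∀ (e : Fin M), e ∈ F (P e) := by intro e; simp [hF]
  have hcard2 : ∀ b, (F b).card ≤ 2 := by
    intro b
    by_contra hc
    push_neg at hc
    have hne : (F b).Nonempty := Finset.card_pos.mp (by omega)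
    have h1 : ∑ i ∈ F b, (1:ℝ)/3 < ∑ i ∈ F b, h i :=
      Finset.sum_lt_sum_of_nonempty hne (fun i _ => (hrange i).1)
    rw [Finset.sum_const, nsmul_eq_mul] at h1
    have h3 : (3:ℝ) ≤ ((F b).card : ℝ) := by exact_mod_cast hc
    have h4 : ∑ i ∈ F b, h i ≤ 1 := hpack b
    nlinarith
  have hsumcard : (∑ b, (F b).card) = M := by
    have h1 := Finset.card_eq_sum_card_fiberwise (f := P) (s := (Finset.univ : Finset (Fin M)))
      (t := Finset.univ) (fun x _ => Finset.mem_univ _)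
    simp only [Finset.card_univ, Fintype.card_fin] at h1
    exact h1.symm
  have h2k : 2 * k ≤ M := by
    have h1 : (∑ b, (F b).card) ≤ ∑ _b : Fin (M - k), 2 :=
      Finset.sum_le_sum (fun b _ => hcard2 b)
    simp only [Finset.sum_const, Finset.card_univ, Fintype.card_fin, smul_eq_mul] at h1
    omega
  set B2 : Finset (Fin (M - k)) := Finset.univ.filter (fun b => (F b).card = 2) with hB2def
  have hB2 : k ≤ B2.card := by
    have hb : ∀ b, (F b).card ≤ 1 + (if (F b).card = 2 then 1 else 0) := by
      intro b; have := hcard2 b; split <;> omega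
    have h1 : (∑ b, (F b).card) ≤ ∑ b, (1 + if (F b).card = 2 then 1 else 0) :=
      Finset.sum_le_sum (fun b _ => hb b)
    rw [hsumcard, Finset.sum_add_distrib, ← Finset.card_filter] at h1
    simp only [Finset.sum_const, Finset.card_univ, Fintype.card_fin, smul_eq_mul, mul_one] at h1
    rw [hB2def]
    omega
  -- main combinatorial claim
  have main : ∀ i : ℕ, ∀ _hik : i < k,
      h ⟨M - 2*k + i, by omega⟩ + h ⟨M - 1 - i, by omega⟩ ≤ 1 := by
    intro i hik
    by_contra hle
    push_neg at hle
    set A : Fin M := ⟨M - 2*k + i, by omega⟩ with hA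
    set Bf : Fin M := ⟨M - 1 - i, by omega⟩ with hBf
    set D1 : Finset (Fin (M - k)) := B2.filter (fun b => ∃ e ∈ F b, M - i ≤ e.val) with hD1def
    set D2 : Finset (Fin (M - k)) := B2.filter (fun b => ∀ e ∈ F b, e.val ≤ M - 1 - i) with hD2def
    have hcover : B2 ⊆ D1 ∪ D2 := by
      intro b hb
      by_cases hc : ∀ e ∈ F b, e.val ≤ M - 1 - i
      · exact Finset.mem_union_right _ (Finset.mem_filter.mpr ⟨hb, hc⟩)
      · push_neg at hc
        obtain ⟨e, he, hev⟩ := hc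
        exact Finset.mem_union_left _ (Finset.mem_filter.mpr ⟨hb, ⟨e, he, by omega⟩⟩)
    have hD1 : D1.card ≤ i := by
      have hsub : D1 ⊆ (Finset.univ.filter (fun e : Fin M => M - i ≤ e.val)).image P := by
        intro b hb
        rw [hD1def, Finset.mem_filter] at hb
        obtain ⟨e, he, hei⟩ := hb.2
        have hPe : P e = b := by simpa [hF] using he
        exact Finset.mem_image.mpr ⟨e, Finset.mem_filter.mpr ⟨Finset.mem_univ _, hei⟩, hPe⟩
      have h1 : (Finset.univ.filter (fun e : Fin M => M - i ≤ e.val)).card ≤ i := by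
        have h2 := Finset.card_le_card_of_injOn (Fin.val)
          (s := Finset.univ.filter (fun e : Fin M => M - i ≤ e.val))
          (t := Finset.Icc (M - i) (M - 1))
          (fun a ha => by
            rw [Finset.mem_coe, Finset.mem_filter] at ha
            rw [Finset.mem_coe, Finset.mem_Icc]
            have h3 := a.isLt
            obtain ⟨_, h4⟩ := ha
            exact ⟨h4, by omega⟩)
          (fun a _ b _ hab => Fin.ext hab)
        rw [Nat.card_Icc] at h2
        omega
      calc D1.card ≤ _ := Finset.card_le_card hsub
        _ ≤ _ := Finset.card_image_le
        _ ≤ i := h1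
    have hD2 : 2 * D2.card ≤ 2*k - 2*i - 1 := by
      set S : Finset (Fin M) := Finset.univ.filter (fun e : Fin M => P e ∈ D2) with hSdef
      have hS : S.card = ∑ b ∈ D2, (F b).card := by
        rw [Finset.card_eq_sum_card_fiberwise (f := P) (s := S) (t := D2)
          (fun e he => (Finset.mem_filter.mp he).2)]
        apply Finset.sum_congr rfl
        intro b hb
        congr 1
        ext e
        simp only [hSdef, hF, Finset.mem_filter, Finset.mem_univ, true_and]
        constructor
        · rintro ⟨_, h2⟩; exact h2
        · intro h2; exact ⟨h2 ▸ hb, h2⟩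
      have hS2 : S.card = 2 * D2.card := by
        rw [hS, Finset.sum_congr rfl (fun b hb => ?_), Finset.sum_const, smul_eq_mul, mul_comm]
        have hbB2 : b ∈ B2 := Finset.mem_of_mem_filter _ hb
        rw [hB2def, Finset.mem_filter] at hbB2
        exact hbB2.2
      have hband : ∀ e ∈ S, M - 2*k + i + 1 ≤ e.val ∧ e.val ≤ M - 1 - i := by
        intro e he
        have hPe : P e ∈ D2 := (Finset.mem_filter.mp he).2
        have hPeD2 := (Finset.mem_filter.mp hPe).2
        have hup : e.val ≤ M - 1 - i := hPeD2 e (hFmem e)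
        refine ⟨?_, hup⟩
        by_contra hlow
        push_neg at hlow
        have hcard : (F (P e)).card = 2 := by
          have hbB2 : P e ∈ B2 := Finset.mem_of_mem_filter _ hPe
          rw [hB2def, Finset.mem_filter] at hbB2
          exact hbB2.2
        obtain ⟨e', he', hne⟩ := Finset.exists_mem_ne (s := F (P e)) (by omega) e
        have hsub : ({e', e} : Finset (Fin M)) ⊆ F (P e) := by
          intro x hx
          rw [Finset.mem_insert, Finset.mem_singleton] at hx
          rcases hx with hx | hx
          · rw [hx]; exact he'
          · rw [hx]; exact hFmem e
        have hpair : F (P e) = {e', e} :=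
          (Finset.eq_of_subset_of_card_le hsub (by rw [Finset.card_pair hne]; omega)).symm
        have hsum : h e' + h e ≤ 1 := by
          have hpp : ∑ i ∈ F (P e), h i ≤ 1 := hpack (P e)
          rw [hpair, Finset.sum_pair hne] at hpp
          exact hpp
        have h1 : h A ≤ h e := hsort e A (by rw [Fin.le_def]; simp [hA]; omega)
        have h2 : h Bf ≤ h e' := by
          apply hsort e' Bf
          rw [Fin.le_def]
          have := hPeD2 e' he'
          simp [hBf]
          omega
        linarith
      have hScard : S.card ≤ 2*k - 2*i - 1 := by
        have h2 := Finset.card_le_card_of_injOn (Fin.val)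
          (s := S) (t := Finset.Icc (M - 2*k + i + 1) (M - 1 - i))
          (fun a ha => by
            rw [Finset.mem_coe, Finset.mem_Icc]
            exact hband a ha)
          (fun a _ b _ hab => Fin.ext hab)
        rw [Nat.card_Icc] at h2
        omega
      omega
    have hfinal := Finset.card_le_card hcover
    have := Finset.card_union_le D1 D2
    omega
  -- construction of Q
  have hQbound : ∀ x : {i : Fin M // M ≤ i.val + 2 * k},
      min (x.1.val - (M - 2*k)) (2*k - 1 - (x.1.val - (M - 2*k))) < k := by
    intro x
    have h1 := x.2
    have h2 := x.1.isLt
    omega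
  refine ⟨fun x => ⟨min (x.1.val - (M - 2*k)) (2*k - 1 - (x.1.val - (M - 2*k))), hQbound x⟩, ?_, ?_⟩
  all_goals {
    intro b
    have hb := b.isLt
    have hx1p : M - 2*k + b.val < M := by omega
    have hx2p : M - 1 - b.val < M := by omega
    set x1 : {i : Fin M // M ≤ i.val + 2 * k} := ⟨⟨M - 2*k + b.val, hx1p⟩, by show M ≤ M - 2*k + b.val + 2*k; omega⟩ with hx1
    set x2 : {i : Fin M // M ≤ i.val + 2 * k} := ⟨⟨M - 1 - b.val, hx2p⟩, by show M ≤ M - 1 - b.val + 2*k; omega⟩ with hx2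
    have hne : x1 ≠ x2 := by
      intro hcon
      rw [hx1, hx2, Subtype.ext_iff, Fin.ext_iff] at hcon
      simp at hcon
      omega
    have hfiber : (Finset.univ.filter
        (fun x : {i : Fin M // M ≤ i.val + 2 * k} =>
          (⟨min (x.1.val - (M - 2*k)) (2*k - 1 - (x.1.val - (M - 2*k))), hQbound x⟩ : Fin k) = b))
        = {x1, x2} := by
      ext x
      simp only [Finset.mem_filter, Finset.mem_univ, true_and, Finset.mem_insert,
        Finset.mem_singleton, hx1, hx2, Fin.ext_iff, Subtype.ext_iff, Fin.val_mk]
      have h1 := x.2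
      have h2 := x.1.isLt
      omega
    rw [hfiber]
    first
    | (rw [Finset.card_pair hne])
    | (rw [Finset.sum_pair hne]; exact main b.val b.isLt)
  }
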